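/- Let K(s) ∈ ℂⁿˣⁿ, B(s) ∈ ℂⁿˣᵐ, C(s) ∈ ℂᵖˣⁿ be matrix-valued functions, D ∈ ℂᵖˣᵐ, and H(s) = C(s)K(s)⁻¹B(s) + D where K(s) is invertible. Let V, W ∈ ℂⁿˣʳ and define the reduced system K_r(s) = WᵀK(s)V, B_r(s) = WᵀB(s), C_r(s) = C(s)V, H_r(s) = C_r(s)K_r(s)⁻¹B_r(s) + D. Fix σ ∈ ℂ with K(σ) and K_r(σ) invertible and a nonzero r ∈ ℂᵐ. If K(σ)⁻¹B(σ)r lies in the column space of V, then H(σ)r = H_r(σ)r. -/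
import Mathlib

open Matrix
open scoped Matrix

/-- Right tangential interpolation for generalized coprime representations:
for `H(s) = C(s) K(s)⁻¹ B(s) + D` and the projected reduced model
`H_r(s) = C(s)V (Wᵀ K(s) V)⁻¹ Wᵀ B(s) + D`, if `K(σ)⁻¹ B(σ) r` lies in the
column space of `V`, then `H(σ) r = H_r(σ) r`. -/
theorem coprime_right_tangential_interpolation
    {n m p r : ℕ}
    (K : ℂ → Matrix (Fin n) (Fin n) ℂ)
    (B : ℂ → Matrix (Fin n) (Fin m) ℂ)
    (C : ℂ → Matrix (Fin p) (Fin n) ℂ)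
    (D : Matrix (Fin p) (Fin m) ℂ)
    (V W : Matrix (Fin n) (Fin r) ℂ)
    (σ : ℂ)
    (hK : IsUnit (K σ).det)
    (hKr : IsUnit (Wᵀ * K σ * V).det)
    (rdir : Fin m → ℂ) (hrdir : rdir ≠ 0)
    (hran : ∃ c : Fin r → ℂ, V *ᵥ c = (K σ)⁻¹ *ᵥ (B σ *ᵥ rdir)) :
    (C σ * (K σ)⁻¹ * B σ + D) *ᵥ rdir
      = ((C σ * V) * (Wᵀ * K σ * V)⁻¹ * (Wᵀ * B σ) + D) *ᵥ rdir := by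
  obtain ⟨c, hc⟩ := hran
  have h1 : (Wᵀ * K σ * V) *ᵥ c = Wᵀ *ᵥ (B σ *ᵥ rdir) := by
    simp only [← mulVec_mulVec]
    rw [hc]
    simp only [mulVec_mulVec, ← Matrix.mul_assoc]
    rw [Matrix.mul_assoc Wᵀ (K σ) (K σ)⁻¹, Matrix.mul_nonsing_inv _ hK, Matrix.mul_one]
  have h2 : (Wᵀ * K σ * V)⁻¹ *ᵥ (Wᵀ *ᵥ (B σ *ᵥ rdir)) = c := by
    rw [← h1, mulVec_mulVec, Matrix.nonsing_inv_mul _ hKr, one_mulVec]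
  simp only [add_mulVec, ← mulVec_mulVec]
  rw [h2, hc]
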